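/- Let R be a simple (nonzero) ring and m ≥ 1. Let A ⊆ R^m be a subring such that (i) each coordinate projection p_{i}: A → R is surjective, and (ii) for each coordinate i there exists x ∈ A with x_i = 0 and x_j ≠ 0 for all j ≠ i. Suppose moreover that for every subset I of coordinates with |I| < m the projection p_I(A) already equals R^I. Then under these hypotheses p_I(A) = R^I for all subsets I, i.e., A = R^m. More precisely: by induction on |I|, if for I with |I| = m′ one picks i ∈ I and the ideal 𝓘 = {y ∈ R^{I∖{i}} : (0,y) ∈ p_I(A)} of R^{I∖{i}}, then condition (ii) together with simplicity of each factor forces 𝓘 = R^{I∖{i}}, hence p_I(A) = R^I. -/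
import Mathlib


/-- Induction step for surjectivity of a subring of a power of a simple ring:
if `A ⊆ R^m` is a subring whose coordinate projections are surjective, which
for each coordinate `i` contains an element vanishing exactly at `i`, and which
projects onto `R^I` for every proper subset `I` of coordinates, then `A = R^m`. -/
theorem stmt15 {R : Type} [Ring R] [Nontrivial R] [IsSimpleRing R] (m : ℕ)
    (A : Subring (∀ _ : Fin m, R))
    (hsurj : ∀ i : Fin m, ∀ y : R, ∃ x ∈ A, x i = y)
    (hsep : ∀ i : Fin m, ∃ x ∈ A, x i = 0 ∧ ∀ j : Fin m, j ≠ i → x j ≠ 0)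
    (hproper : ∀ I : Finset (Fin m), I.card < m →
      ∀ y : Fin m → R, ∃ x ∈ A, ∀ i ∈ I, x i = y i) :
    A = ⊤ := by
  rcases Nat.eq_zero_or_pos m with hm | hm
  · subst hm
    ext x
    simp only [Subring.mem_top, iff_true]
    have hx : x = 0 := funext fun i => i.elim0
    rw [hx]; exact zero_mem A
  · obtain ⟨i⟩ : Nonempty (Fin m) := ⟨⟨0, hm⟩⟩
    have hcard : ({i}ᶜ : Finset (Fin m)).card < m := by
      have : ({i}ᶜ : Finset (Fin m)).card = m - 1 := by
        simp [Finset.card_compl]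
      rw [this]; exact Nat.sub_lt hm one_pos
    -- left absorption
    have habsl : ∀ (v z : Fin m → R), z ∈ A → z i = 0 → v * z ∈ A := by
      intro v z hz hzi
      obtain ⟨a, ha, hav⟩ := hproper {i}ᶜ hcard v
      have heq : v * z = a * z := by
        funext k
        by_cases hk : k = i
        · subst hk; simp [hzi]
        · simp [hav k (by simp [hk])]
      rw [heq]; exact mul_mem ha hz
    -- right absorption
    have habsr : ∀ (v z : Fin m → R), z ∈ A → z i = 0 → z * v ∈ A := by
      intro v z hz hzi
      obtain ⟨a, ha, hav⟩ := hproper {i}ᶜ hcard v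
      have heq : z * v = z * a := by
        funext k
        by_cases hk : k = i
        · subst hk; simp [hzi]
        · simp [hav k (by simp [hk])]
      rw [heq]; exact mul_mem hz ha
    have hsingle : ∀ j : Fin m, j ≠ i → ∀ r : R, Pi.single j r ∈ A := by
      intro j hj
      set J : TwoSidedIdeal R := TwoSidedIdeal.mk'
        {r | Pi.single j r ∈ A}
        (by simp only [Set.mem_setOf_eq, Pi.single_zero]; exact zero_mem A)
        (fun {x y} hx hy => by
          have hx' : Pi.single j x ∈ A := hx
          have hy' : Pi.single j y ∈ A := hy
          show Pi.single j (x + y) ∈ A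
          rw [Pi.single_add]; exact add_mem hx' hy')
        (fun {x} hx => by
          have hx' : Pi.single j x ∈ A := hx
          show Pi.single j (-x) ∈ A
          rw [Pi.single_neg]; exact neg_mem hx')
        (fun {x y} hy => by
          have hy' : Pi.single j y ∈ A := hy
          have h := habsl (fun _ => x) (Pi.single j y) hy' (Pi.single_eq_of_ne (Ne.symm hj) _)
          have heq : (fun _ => x) * Pi.single j y = Pi.single j (x * y) := by
            funext k
            by_cases hk : k = j
            · subst hk; simp
            · simp [Pi.single_eq_of_ne hk]
          rwa [heq] at h)
        (fun {x y} hx => by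
          have hx' : Pi.single j x ∈ A := hx
          have h := habsr (fun _ => y) (Pi.single j x) hx' (Pi.single_eq_of_ne (Ne.symm hj) _)
          have heq : Pi.single j x * (fun _ => y) = Pi.single j (x * y) := by
            funext k
            by_cases hk : k = j
            · subst hk; simp
            · simp [Pi.single_eq_of_ne hk]
          rwa [heq] at h) with hJ
      obtain ⟨x0, hx0, hx0i, hx0j⟩ := hsep i
      have hx0jA : Pi.single j (x0 j) ∈ A := by
        have h := habsl (Pi.single j 1) x0 hx0 hx0i
        have heq : Pi.single j (1:R) * x0 = Pi.single j (x0 j) := by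
          funext k
          by_cases hk : k = j
          · subst hk; simp
          · simp [Pi.single_eq_of_ne hk]
        rwa [heq] at h
      have hone : (1 : R) ∈ J := by
        refine IsSimpleRing.one_mem_of_ne_zero_mem J (hx0j j hj) ?_
        rw [hJ, TwoSidedIdeal.mem_mk']
        exact hx0jA
      intro r
      have : r ∈ J := by
        have := J.mul_mem_left r 1 hone
        simpa using this
      rwa [hJ, TwoSidedIdeal.mem_mk'] at this
    ext y
    simp only [Subring.mem_top, iff_true]
    obtain ⟨a, ha, hai⟩ := hsurj i (y i)
    have hy : y = a + ∑ j : Fin m, Pi.single j ((y - a) j) := by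
      rw [Finset.univ_sum_single (y - a)]
      abel
    rw [hy]
    refine add_mem ha (sum_mem fun j _ => ?_)
    by_cases hj : j = i
    · subst hj
      have : (y - a) j = 0 := by simp [hai]
      rw [this, Pi.single_zero]; exact zero_mem A
    · exact hsingle j hj _
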